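/- Fix l ≥ 2. For every N ≥ 1 and k ∈ {0,1,...,l-2}, p(k,N) = (2^{N+1}/l) · ∑_{s=1}^{l-1} cos^N(sπ/l) · sin(sπ/l) · sin(s(k+1)π/l). -/

import Mathlib

/-- The tilting multiplicity `p(k,N)`, defined by the recursion `p(k,0) = [k = 0]`,
`p(k,N) = p(k-1,N-1) + p(k+1,N-1)` for `0 ≤ k ≤ l-3`, `p(l-2,N) = p(l-3,N-1)`,
with the convention `p(-1,·) = 0`. -/
def p (l : ℕ) : ℕ → ℕ → ℕ
  | 0, k => if k = 0 then 1 else 0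
  | N + 1, k =>
    if k + 2 = l then (if 3 ≤ l then p l N (l - 3) else 0)
    else if k = 0 then p l N 1
    else p l N (k - 1) + p l N (k + 1)

open Real Finset


lemma sum_cos_eq (l m : ℕ) (hl : 1 ≤ l) (hm : 1 ≤ m) (hml : m ≤ l) :
    ∑ s ∈ Finset.range l, Real.cos (s * (m * π / l)) =
      if Even m then 0 else 1 := by
  set θ : ℝ := m * π / l with hθdef
  have hl0 : (0:ℝ) < l := by positivity
  have hθpos : 0 < θ := by
    apply div_pos (by positivity) hl0
  have hθle : θ ≤ π := by
    rw [hθdef, div_le_iff₀ hl0]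
    have : (m:ℝ) ≤ l := by exact_mod_cast hml
    nlinarith [Real.pi_pos]
  have hsin : Real.sin (θ/2) ≠ 0 := by
    apply ne_of_gt
    apply Real.sin_pos_of_pos_of_lt_pi (by linarith)
    nlinarith [Real.pi_pos]
  have key : ∀ s : ℕ, Real.sin ((s+1) * θ - θ/2) - Real.sin (s * θ - θ/2)
      = 2 * Real.sin (θ/2) * Real.cos (s * θ) := by
    intro s
    rw [Real.sin_sub_sin]
    ring_nf
  have tel : ∑ s ∈ Finset.range l, (Real.sin (((s:ℝ)+1) * θ - θ/2) - Real.sin ((s:ℝ) * θ - θ/2))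
      = Real.sin ((l:ℝ) * θ - θ/2) - Real.sin ((0:ℝ) * θ - θ/2) := by
    have := Finset.sum_range_sub (fun s : ℕ => Real.sin ((s:ℝ) * θ - θ/2)) l
    simpa using this
  have hsum : 2 * Real.sin (θ/2) * ∑ s ∈ Finset.range l, Real.cos (s * θ)
      = Real.sin ((l:ℝ) * θ - θ/2) + Real.sin (θ/2) := by
    calc 2 * Real.sin (θ/2) * ∑ s ∈ Finset.range l, Real.cos (s * θ)
        = ∑ s ∈ Finset.range l, (Real.sin (((s:ℝ)+1) * θ - θ/2) - Real.sin ((s:ℝ) * θ - θ/2)) := by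
          rw [Finset.mul_sum]
          exact Finset.sum_congr rfl (fun s _ => (key s).symm)
      _ = Real.sin ((l:ℝ) * θ - θ/2) - Real.sin ((0:ℝ) * θ - θ/2) := tel
      _ = Real.sin ((l:ℝ) * θ - θ/2) + Real.sin (θ/2) := by
          rw [zero_mul, zero_sub, Real.sin_neg]; ring
  have hlθ : (l:ℝ) * θ = m * π := by
    rw [hθdef]; field_simp
  have hend : Real.sin ((l:ℝ) * θ - θ/2) = -((-1)^m * Real.sin (θ/2)) := by
    rw [hlθ, Real.sin_nat_mul_pi_sub]
  rw [hend] at hsum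
  rcases Nat.even_or_odd m with h | h
  · rw [h.neg_one_pow] at hsum
    simp only [if_pos h]
    have h0 : 2 * Real.sin (θ/2) * ∑ s ∈ Finset.range l, Real.cos (s * θ) = 0 := by
      rw [hsum]; ring
    rcases mul_eq_zero.1 h0 with h' | h'
    · exact absurd h' (mul_ne_zero two_ne_zero hsin)
    · exact h'
  · rw [h.neg_one_pow] at hsum
    simp only [if_neg (Nat.not_even_iff_odd.2 h)]
    have h2 : Real.sin (θ/2) ≠ 0 := hsin
    have : 2 * Real.sin (θ/2) * ∑ s ∈ Finset.range l, Real.cos (s * θ)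
        = 2 * Real.sin (θ/2) * 1 := by rw [hsum]; ring
    exact mul_left_cancel₀ (mul_ne_zero two_ne_zero hsin) this

lemma cosC (l m : ℕ) (hl : 1 ≤ l) (hm : 1 ≤ m) (hml : m ≤ l) :
    ∑ s ∈ Finset.Ico 1 l, Real.cos (s * m * π / l) = if Even m then -1 else 0 := by
  have h0 : ∑ s ∈ Finset.Ico 0 l, Real.cos ((s:ℝ) * m * π / l)
      = Real.cos ((0:ℕ) * (m:ℝ) * π / l) + ∑ s ∈ Finset.Ico (0+1) l, Real.cos ((s:ℝ) * m * π / l) :=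
    Finset.sum_eq_sum_Ico_succ_bot (by omega) _
  have h1 : ∑ s ∈ Finset.Ico 0 l, Real.cos ((s:ℝ) * m * π / l) = if Even m then 0 else 1 := by
    rw [← Finset.range_eq_Ico, ← sum_cos_eq l m hl hm hml]
    exact Finset.sum_congr rfl fun s _ => by congr 1; ring
  rw [h1] at h0
  simp only [Nat.cast_zero, zero_mul, zero_div, Real.cos_zero] at h0
  rcases Nat.even_or_odd m with h | h
  · simp only [if_pos h] at h0 ⊢; linarith
  · simp only [if_neg (Nat.not_even_iff_odd.2 h)] at h0 ⊢; linarith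

lemma main_lemma (l : ℕ) (hl : 2 ≤ l) (N : ℕ) : ∀ k : ℕ, k ≤ l - 2 → (p l N k : ℝ) =
    2 ^ (N + 1) / l * ∑ s ∈ Finset.Ico 1 l,
      Real.cos (s * π / l) ^ N * Real.sin (s * π / l) * Real.sin (s * (k + 1) * π / l) := by
  have hl0 : (l:ℝ) ≠ 0 := by positivity
  induction N with
  | zero =>
    intro k hk
    have hterm : ∀ s : ℕ, Real.cos ((s:ℝ) * π / l) ^ 0 * Real.sin ((s:ℝ) * π / l) *
        Real.sin ((s:ℝ) * ((k:ℝ) + 1) * π / l)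
        = (Real.cos ((s:ℝ) * k * π / l) - Real.cos ((s:ℝ) * ((k:ℝ)+2) * π / l)) / 2 := by
      intro s
      have e1 : ((s:ℝ) * k * π / l + (s:ℝ) * ((k:ℝ)+2) * π / l) / 2 = (s:ℝ) * ((k:ℝ)+1) * π / l := by
        ring
      have e2 : ((s:ℝ) * k * π / l - (s:ℝ) * ((k:ℝ)+2) * π / l) / 2 = -((s:ℝ) * π / l) := by
        ring
      rw [Real.cos_sub_cos, e1, e2, Real.sin_neg, pow_zero]
      ring
    rw [Finset.sum_congr rfl fun s _ => hterm s]
    rcases Nat.eq_zero_or_pos k with hk0 | hk0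
    · subst hk0
      have c2 : ∑ s ∈ Finset.Ico 1 l, Real.cos ((s:ℝ) * (((0:ℕ):ℝ) + 2) * π / l) = -1 := by
        have h2 := cosC l 2 (by omega) (by omega) hl
        rw [if_pos (by norm_num : Even 2)] at h2
        rw [← h2]
        exact Finset.sum_congr rfl fun s _ => by norm_num
      have c0 : ∑ s ∈ Finset.Ico 1 l, Real.cos ((s:ℝ) * ((0:ℕ):ℝ) * π / l) = (l:ℝ) - 1 := by
        have h1 : ∀ s ∈ Finset.Ico 1 l, Real.cos ((s:ℝ) * ((0:ℕ):ℝ) * π / l) = 1 := by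
          intro s _; norm_num
        rw [Finset.sum_congr rfl h1, Finset.sum_const, Nat.card_Ico, nsmul_eq_mul, mul_one,
          Nat.cast_sub (by omega : 1 ≤ l), Nat.cast_one]
      rw [← Finset.sum_div, Finset.sum_sub_distrib, c0, c2]
      have hp1 : p l 0 0 = 1 := by simp [p]
      rw [hp1]
      field_simp
      push_cast; ring
    · have hk2 : k + 2 ≤ l := by omega
      have ck : ∑ s ∈ Finset.Ico 1 l, Real.cos ((s:ℝ) * (k:ℝ) * π / l)
          = if Even k then -1 else 0 := cosC l k (by omega) hk0 (by omega)
      have ck2 : ∑ s ∈ Finset.Ico 1 l, Real.cos ((s:ℝ) * ((k:ℝ) + 2) * π / l)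
          = if Even k then -1 else 0 := by
        have h2 := cosC l (k+2) (by omega) (by omega) hk2
        calc ∑ s ∈ Finset.Ico 1 l, Real.cos ((s:ℝ) * ((k:ℝ) + 2) * π / l)
            = ∑ s ∈ Finset.Ico 1 l, Real.cos ((s:ℝ) * ((k+2:ℕ):ℝ) * π / l) :=
              Finset.sum_congr rfl fun s _ => by push_cast; ring_nf
          _ = if Even (k+2) then -1 else 0 := h2
          _ = if Even k then -1 else 0 := by simp [Nat.even_add]
      rw [← Finset.sum_div, Finset.sum_sub_distrib, ck, ck2]
      have hp0 : p l 0 k = 0 := by simp [p, Nat.pos_iff_ne_zero.mp hk0]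
      rw [hp0]
      rcases Nat.even_or_odd k with h | h
      · simp [h]
      · simp [Nat.not_even_iff_odd.2 h]
  | succ N IH =>
    intro k hk
    have hrec : ∀ s : ℕ,
        Real.cos ((s:ℝ) * π / l) ^ (N+1) * Real.sin ((s:ℝ) * π / l) *
          Real.sin ((s:ℝ) * ((k:ℝ) + 1) * π / l)
        = (Real.cos ((s:ℝ) * π / l) ^ N * Real.sin ((s:ℝ) * π / l) *
              Real.sin ((s:ℝ) * ((k:ℝ) + 2) * π / l)
          + Real.cos ((s:ℝ) * π / l) ^ N * Real.sin ((s:ℝ) * π / l) *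
              Real.sin ((s:ℝ) * (k:ℝ) * π / l)) / 2 := by
      intro s
      have e1 : (s:ℝ)*((k:ℝ)+2)*π/l = (s:ℝ)*((k:ℝ)+1)*π/l + (s:ℝ)*π/l := by ring
      have e2 : (s:ℝ)*(k:ℝ)*π/l = (s:ℝ)*((k:ℝ)+1)*π/l - (s:ℝ)*π/l := by ring
      rw [e1, e2, Real.sin_add, Real.sin_sub, pow_succ]
      ring
    rw [Finset.sum_congr rfl fun s _ => hrec s, ← Finset.sum_div, Finset.sum_add_distrib]
    set SA := ∑ s ∈ Finset.Ico 1 l, Real.cos ((s:ℝ) * π / l) ^ N * Real.sin ((s:ℝ) * π / l) *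
        Real.sin ((s:ℝ) * ((k:ℝ) + 2) * π / l) with hSA
    set SB := ∑ s ∈ Finset.Ico 1 l, Real.cos ((s:ℝ) * π / l) ^ N * Real.sin ((s:ℝ) * π / l) *
        Real.sin ((s:ℝ) * (k:ℝ) * π / l) with hSB
    by_cases hkl : k + 2 = l
    · have hA : SA = 0 := by
        apply Finset.sum_eq_zero
        intro s _
        have harg : (s:ℝ) * ((k:ℝ) + 2) * π / l = (s:ℝ) * π := by
          have hc : (k:ℝ) + 2 = l := by exact_mod_cast congrArg (Nat.cast (R := ℝ)) hkl
          rw [hc]; field_simp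
        rw [harg, Real.sin_nat_mul_pi, mul_zero]
      by_cases hl3 : 3 ≤ l
      · have hp : p l (N+1) k = p l N (l-3) := by simp [p, hkl, hl3]
        have hB : SB = ∑ s ∈ Finset.Ico 1 l, Real.cos ((s:ℝ) * π / l) ^ N *
            Real.sin ((s:ℝ) * π / l) * Real.sin ((s:ℝ) * (((l-3:ℕ):ℝ) + 1) * π / l) := by
          apply Finset.sum_congr rfl
          intro s _
          have : ((l-3:ℕ):ℝ) + 1 = (k:ℝ) := by
            have hk' : k = l - 2 := by omega
            have h3 : ((l-3:ℕ):ℝ) = (l:ℝ) - 3 := by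
              rw [Nat.cast_sub (by omega : 3 ≤ l)]; norm_num
            have h2 : ((l-2:ℕ):ℝ) = (l:ℝ) - 2 := by
              rw [Nat.cast_sub (by omega : 2 ≤ l)]; norm_num
            rw [hk', h2, h3]; ring
          rw [this]
        rw [hp, hA, hB, IH (l-3) (by omega)]
        ring
      · have hl2 : l = 2 := by omega
        have hk0 : k = 0 := by omega
        have hp : p l (N+1) k = 0 := by simp [p, hkl, hl3]
        have hB : SB = 0 := by
          apply Finset.sum_eq_zero
          intro s _
          rw [hk0]
          norm_num
        rw [hp, hA, hB]
        norm_num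
    · by_cases hk0 : k = 0
      · subst hk0
        have hp : p l (N+1) 0 = p l N 1 := by simp [p, hkl]
        have hB : SB = 0 := by
          apply Finset.sum_eq_zero
          intro s _
          norm_num
        have hA : SA = ∑ s ∈ Finset.Ico 1 l, Real.cos ((s:ℝ) * π / l) ^ N *
            Real.sin ((s:ℝ) * π / l) * Real.sin ((s:ℝ) * (((1:ℕ):ℝ) + 1) * π / l) := by
          apply Finset.sum_congr rfl
          intro s _
          norm_num
        rw [hp, hA, hB, IH 1 (by omega)]
        ring
      · have hp : p l (N+1) k = p l N (k-1) + p l N (k+1) := by simp [p, hkl, hk0]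
        have hA : SA = ∑ s ∈ Finset.Ico 1 l, Real.cos ((s:ℝ) * π / l) ^ N *
            Real.sin ((s:ℝ) * π / l) * Real.sin ((s:ℝ) * (((k+1:ℕ):ℝ) + 1) * π / l) := by
          apply Finset.sum_congr rfl
          intro s _
          have : ((k+1:ℕ):ℝ) + 1 = (k:ℝ) + 2 := by push_cast; ring
          rw [this]
        have hB : SB = ∑ s ∈ Finset.Ico 1 l, Real.cos ((s:ℝ) * π / l) ^ N *
            Real.sin ((s:ℝ) * π / l) * Real.sin ((s:ℝ) * (((k-1:ℕ):ℝ) + 1) * π / l) := by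
          apply Finset.sum_congr rfl
          intro s _
          have : ((k-1:ℕ):ℝ) + 1 = (k:ℝ) := by
            rw [Nat.cast_sub (by omega : 1 ≤ k)]; ring
          rw [this]
        rw [hp, hA, hB, Nat.cast_add, IH (k-1) (by omega), IH (k+1) (by omega)]
        ring


theorem stmt_16 (l : ℕ) (hl : 2 ≤ l) (N k : ℕ) (hN : 1 ≤ N) (hk : k ≤ l - 2) :
    (p l N k : ℝ) =
      2 ^ (N + 1) / l *
        ∑ s ∈ Finset.Icc 1 (l - 1),
          Real.cos (s * Real.pi / l) ^ N * Real.sin (s * Real.pi / l) *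
            Real.sin (s * (k + 1) * Real.pi / l) := by
  have h : Finset.Icc 1 (l - 1) = Finset.Ico 1 l := by
    rw [← Finset.Ico_add_one_right_eq_Icc]
    congr 1
    omega
  rw [h]
  exact main_lemma l hl N k hk
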